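/- (Uniqueness: any classical solution of the free problem is given by formula (q0).) Let s₀, s₁ : ℝ → ℝ and let q : ℝ × ℝ → ℝ be C² and satisfy q_xx(x,t) = 2·q_xt(x,t) for all x ≥ 0 and all t ∈ ℝ, together with q(0,t) = s₀(t) and q_x(0,t) = s₁(t) for all t ∈ ℝ. Then for every x ≥ 0 and every t ∈ ℝ, q(x,t) = s₀(t) + (1/2)·∫_t^{t+2x} s₁(τ) dτ. -/

import Mathlib

open Set

/-- Partial derivative in the first variable. -/
noncomputable def partialX (f : ℝ × ℝ → ℝ) : ℝ × ℝ → ℝ :=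
  fun p => deriv (fun x => f (x, p.2)) p.1

/-- Partial derivative in the second variable. -/
noncomputable def partialT (f : ℝ × ℝ → ℝ) : ℝ × ℝ → ℝ :=
  fun p => deriv (fun t => f (p.1, t)) p.2

lemma partialX_eq_fderiv (f : ℝ × ℝ → ℝ) (hf : Differentiable ℝ f) (p : ℝ × ℝ) :
    partialX f p = fderiv ℝ f p (1, 0) := by
  have h : HasDerivAt (fun x : ℝ => f (x, p.2)) (fderiv ℝ f p (1, 0)) p.1 := by
    have hpath : HasDerivAt (fun x : ℝ => ((x, p.2) : ℝ × ℝ)) ((1 : ℝ), (0 : ℝ)) p.1 :=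
      (hasDerivAt_id p.1).prodMk (hasDerivAt_const p.1 p.2)
    exact (hf (p.1, p.2)).hasFDerivAt.comp_hasDerivAt p.1 hpath
  exact h.deriv

lemma partialT_eq_fderiv (f : ℝ × ℝ → ℝ) (hf : Differentiable ℝ f) (p : ℝ × ℝ) :
    partialT f p = fderiv ℝ f p (0, 1) := by
  have h : HasDerivAt (fun t : ℝ => f (p.1, t)) (fderiv ℝ f p (0, 1)) p.2 := by
    have hpath : HasDerivAt (fun t : ℝ => ((p.1, t) : ℝ × ℝ)) ((0 : ℝ), (1 : ℝ)) p.2 :=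
      (hasDerivAt_const p.2 p.1).prodMk (hasDerivAt_id p.2)
    exact (hf (p.1, p.2)).hasFDerivAt.comp_hasDerivAt p.2 hpath
  exact h.deriv

/-- Uniqueness: any classical solution of the free problem is given by formula (q0). -/
theorem uniqueness_free_problem
    (s₀ s₁ : ℝ → ℝ) (q : ℝ × ℝ → ℝ) (hq : ContDiff ℝ 2 q)
    (hpde : ∀ x : ℝ, 0 ≤ x → ∀ t : ℝ,
      partialX (partialX q) (x, t) = 2 * partialT (partialX q) (x, t))
    (h0 : ∀ t : ℝ, q (0, t) = s₀ t)
    (h1 : ∀ t : ℝ, partialX q (0, t) = s₁ t) :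
    ∀ x : ℝ, 0 ≤ x → ∀ t : ℝ,
      q (x, t) = s₀ t + (1/2) * ∫ τ in t..(t + 2 * x), s₁ τ := by
  set u : ℝ × ℝ → ℝ := fun p => fderiv ℝ q p (1, 0) with hu_def
  have hq_diff : Differentiable ℝ q := hq.differentiable (by norm_num)
  have hu_cd : ContDiff ℝ 1 u :=
    (hq.fderiv_right (le_refl _)).clm_apply contDiff_const
  have hu_diff : Differentiable ℝ u := hu_cd.differentiable (by norm_num)
  have hu_cont : Continuous u := hu_cd.continuous
  have hpXq : partialX q = u := funext fun p => partialX_eq_fderiv q hq_diff p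
  -- s₁ continuity
  have hs₁ : ∀ τ : ℝ, s₁ τ = u (0, τ) := fun τ => by rw [← h1 τ, hpXq]
  have hs₁c : Continuous s₁ := by
    have : Continuous fun τ : ℝ => u (0, τ) :=
      hu_cont.comp (continuous_const.prodMk continuous_id)
    exact (funext hs₁ : s₁ = _) ▸ this
  -- PDE in fderiv form
  have hpde' : ∀ x : ℝ, 0 ≤ x → ∀ t : ℝ,
      fderiv ℝ u (x, t) (1, 0) = 2 * fderiv ℝ u (x, t) (0, 1) := by
    intro x hx t
    have := hpde x hx t
    rw [hpXq, partialX_eq_fderiv u hu_diff, partialT_eq_fderiv u hu_diff] at this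
    exact this
  intro x hx t
  -- Step 1: u (y, t) = s₁ (t + 2*y) for 0 ≤ y  (characteristics)
  have key : ∀ y : ℝ, 0 ≤ y → ∀ c : ℝ, u (y, c - 2 * y) = s₁ c := by
    intro y hy c
    set φ : ℝ → ℝ := fun s => u (s, c - 2 * s) with hφ_def
    have hφd : ∀ s : ℝ, HasDerivAt φ
        (fderiv ℝ u (s, c - 2 * s) (1, 0) - 2 * fderiv ℝ u (s, c - 2 * s) (0, 1)) s := by
      intro s
      have hpath : HasDerivAt (fun s : ℝ => ((s, c - 2 * s) : ℝ × ℝ)) ((1 : ℝ), (-2 : ℝ)) s := by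
        refine (hasDerivAt_id s).prodMk ?_
        simpa using (((hasDerivAt_id s).const_mul (2 : ℝ)).const_sub c)
      have := (hu_diff (s, c - 2 * s)).hasFDerivAt.comp_hasDerivAt s hpath
      have hlin : fderiv ℝ u (s, c - 2 * s) ((1 : ℝ), (-2 : ℝ))
          = fderiv ℝ u (s, c - 2 * s) (1, 0) - 2 * fderiv ℝ u (s, c - 2 * s) (0, 1) := by
        have : ((1 : ℝ), (-2 : ℝ)) = ((1 : ℝ), (0 : ℝ)) + (-2 : ℝ) • ((0 : ℝ), (1 : ℝ)) := by
          norm_num [Prod.ext_iff]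
        rw [this, map_add, map_smul]
        ring_nf
      rwa [hlin] at this
    have hconst : ∀ s ∈ Icc 0 y, φ s = φ 0 := by
      apply constant_of_has_deriv_right_zero
      · exact fun s _ => (hφd s).continuousAt.continuousWithinAt
      · intro s hs
        have h0 : fderiv ℝ u (s, c - 2 * s) (1, 0) = 2 * fderiv ℝ u (s, c - 2 * s) (0, 1) :=
          hpde' s hs.1 _
        have := (hφd s).hasDerivWithinAt (s := Ici s)
        rw [h0] at this
        simpa using this
    have := hconst y ⟨hy, le_refl y⟩
    simp only [hφ_def] at this
    rw [this]
    simp [hs₁ c]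
  -- Step 2: FTC in x
  set G : ℝ → ℝ := fun y => s₀ t + (1/2) * ∫ τ in t..(t + 2 * y), s₁ τ with hG_def
  set F : ℝ → ℝ := fun y => q (y, t) with hF_def
  have hFd : ∀ y : ℝ, HasDerivAt F (u (y, t)) y := by
    intro y
    have hpath : HasDerivAt (fun y : ℝ => ((y, t) : ℝ × ℝ)) ((1 : ℝ), (0 : ℝ)) y :=
      (hasDerivAt_id y).prodMk (hasDerivAt_const y t)
    exact (hq_diff (y, t)).hasFDerivAt.comp_hasDerivAt y hpath
  have hGd : ∀ y : ℝ, HasDerivAt G (s₁ (t + 2 * y)) y := by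
    intro y
    have hint : HasDerivAt (fun z : ℝ => ∫ τ in t..z, s₁ τ) (s₁ (t + 2 * y)) (t + 2 * y) :=
      (hs₁c.integral_hasStrictDerivAt t (t + 2 * y)).hasDerivAt
    have hinner : HasDerivAt (fun z : ℝ => t + 2 * z) 2 y := by
      simpa using (((hasDerivAt_id y).const_mul (2 : ℝ)).const_add t)
    have := (hint.comp y hinner)
    have h2 : HasDerivAt G ((1/2) * (s₁ (t + 2 * y) * 2)) y :=
      ((this.const_mul (1/2)).const_add (s₀ t))
    have hval : (1/2 : ℝ) * (s₁ (t + 2 * y) * 2) = s₁ (t + 2 * y) := by ring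
    exact hval ▸ h2
  have heq : ∀ y ∈ Icc 0 x, F y = G y := by
    apply eq_of_has_deriv_right_eq (f' := fun y => s₁ (t + 2 * y))
    · intro y hy
      have : u (y, t) = s₁ (t + 2 * y) := by
        have := key y hy.1 (t + 2 * y)
        simpa using this
      exact this ▸ (hFd y).hasDerivWithinAt
    · exact fun y _ => (hGd y).hasDerivWithinAt
    · exact fun y _ => (hFd y).continuousAt.continuousWithinAt
    · exact fun y _ => (hGd y).continuousAt.continuousWithinAt
    · simp [hF_def, hG_def, h0 t]
  exact heq x ⟨hx, le_refl x⟩
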